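/- Let n, m be positive integers with n mod m > 0, and Q = ⌈n/m⌉. Then the minimum achievable maximum machine CPU load, over all assignments of n applications (each with load p and unit memory) to m machines with at most Q instances per machine, is p·(⌊n/m⌋ + 1/⌊m/(n mod m)⌋). -/

import Mathlib

open Finset

/-- Reachability in `t` steps among machines, via shared apps. -/
def ReachAux {ι κ : Type} (A : Finset ι) (Nb : ι → Finset κ) (j₀ : κ) : ℕ → κ → Prop
  | 0 => fun j => j = j₀
  | (t+1) => fun j => ReachAux A Nb j₀ t j ∨
      ∃ i ∈ A, j ∈ Nb i ∧ ∃ j', j' ∈ Nb i ∧ ReachAux A Nb j₀ t j'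

lemma conn_bound {ι κ : Type} [DecidableEq ι] [DecidableEq κ]
    (A : Finset ι) (Nb : ι → Finset κ) (M : Finset κ) (j₀ : κ) (hj₀ : j₀ ∈ M)
    (hne : ∀ i ∈ A, (Nb i).Nonempty) (hsub : ∀ i ∈ A, Nb i ⊆ M) :
    ∃ C : Finset κ, C ⊆ M ∧ j₀ ∈ C ∧
      (∀ i ∈ A, ∀ j ∈ Nb i, j ∈ C → Nb i ⊆ C) ∧
      C.card ≤ 1 + ∑ i ∈ A.filter (fun i => Nb i ⊆ C), ((Nb i).card - 1) := by
  classical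
  set P : κ → Prop := fun j => ∃ t, ReachAux A Nb j₀ t j with hP
  set C : Finset κ := M.filter P with hC
  have hj₀C : j₀ ∈ C := by
    simp only [hC, mem_filter]
    exact ⟨hj₀, 0, rfl⟩
  have hclosed : ∀ i ∈ A, ∀ j ∈ Nb i, j ∈ C → Nb i ⊆ C := by
    intro i hi j hj hjC j' hj'
    simp only [hC, mem_filter] at hjC ⊢
    obtain ⟨hjM, t, ht⟩ := hjC
    exact ⟨hsub i hi hj', t + 1, Or.inr ⟨i, hi, hj', j, hj, ht⟩⟩
  refine ⟨C, filter_subset _ _, hj₀C, hclosed, ?_⟩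
  -- distance function
  set d : κ → ℕ := fun j => if h : P j then Nat.find h else 0 with hd
  -- designated min-distance element of each Nb i
  have hdes0 : ∀ i : ι, ∃ jm : κ, ((Nb i).Nonempty →
      jm ∈ Nb i ∧ ∀ j' ∈ Nb i, d jm ≤ d j') := by
    intro i
    by_cases h : (Nb i).Nonempty
    · obtain ⟨jm, hjm, hmin⟩ := Finset.exists_min_image (Nb i) d h
      exact ⟨jm, fun _ => ⟨hjm, hmin⟩⟩
    · exact ⟨j₀, fun h' => absurd h' h⟩
  choose des hdes using hdes0
  -- for each machine in C other than j₀, a witnessing app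
  have key : ∀ j ∈ C.erase j₀, ∃ i : ι,
      i ∈ A ∧ j ∈ Nb i ∧ ∃ j', j' ∈ Nb i ∧ d j' < d j := by
    intro j hj
    · have hjn : j ≠ j₀ := (mem_erase.1 hj).1
      have hjC : j ∈ C := (mem_erase.1 hj).2
      have hPj : P j := (mem_filter.1 hjC).2
      have hdj : d j = Nat.find hPj := by simp [hd, hPj]
      have hpos : 0 < Nat.find hPj := by
        rcases Nat.eq_zero_or_pos (Nat.find hPj) with h | h
        · exfalso
          have := Nat.find_spec hPj
          rw [h] at this
          exact hjn this
        · exact h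
      obtain ⟨s, hs⟩ : ∃ s, Nat.find hPj = s + 1 := ⟨Nat.find hPj - 1, by omega⟩
      have hspec := Nat.find_spec hPj
      rw [hs] at hspec
      rcases hspec with h | ⟨i, hiA, hjNb, j', hj'Nb, hj'r⟩
      · exfalso
        exact Nat.find_min hPj (by omega) h
      · refine ⟨i, hiA, hjNb, j', hj'Nb, ?_⟩
        have hPj' : P j' := ⟨s, hj'r⟩
        have : d j' ≤ s := by
          simp only [hd, hPj', dif_pos]
          exact Nat.find_le hj'r
        omega
  rcases (C.erase j₀).eq_empty_or_nonempty with hE | hE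
  · have : C.card ≤ 1 := by
      by_contra h
      push_neg at h
      have : 0 < (C.erase j₀).card := by
        rw [card_erase_of_mem hj₀C]; omega
      rw [Finset.card_pos] at this
      rw [hE] at this
      exact absurd this (by simp)
    omega
  · obtain ⟨j1, hj1⟩ := hE
    have : Nonempty ι := ⟨(key j1 hj1).choose⟩
    have key' : ∀ j : κ, ∃ i : ι, j ∈ C.erase j₀ →
        i ∈ A ∧ j ∈ Nb i ∧ ∃ j', j' ∈ Nb i ∧ d j' < d j := by
      intro j
      by_cases hj : j ∈ C.erase j₀
      · exact ⟨(key j hj).choose, fun _ => (key j hj).choose_spec⟩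
      · exact ⟨Classical.arbitrary ι, fun h => absurd h hj⟩
    choose ch hch using key'
    set F : Finset ι := A.filter (fun i => Nb i ⊆ C) with hF
    have hinj : (C.erase j₀).card ≤ (F.sigma (fun i => (Nb i).erase (des i))).card := by
      apply Finset.card_le_card_of_injOn (fun j => ⟨ch j, j⟩)
      · intro j hj
        obtain ⟨hiA, hjNb, j', hj'Nb, hlt⟩ := hch j hj
        have hjC : j ∈ C := (mem_erase.1 hj).2
        have hNbC : Nb (ch j) ⊆ C := hclosed _ hiA _ hjNb hjC
        have hchF : ch j ∈ F := by
          rw [hF, mem_filter]; exact ⟨hiA, hNbC⟩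
        rw [Finset.mem_coe, mem_sigma]
        refine ⟨hchF, ?_⟩
        rw [mem_erase]
        refine ⟨?_, hjNb⟩
        intro hdes_eq
        dsimp only at hdes_eq
        have hnem : (Nb (ch j)).Nonempty := ⟨j, hjNb⟩
        have hmin := (hdes (ch j) hnem).2 j' hj'Nb
        rw [← hdes_eq] at hmin
        omega
      · intro a _ b _ hab
        have := congrArg (fun s : (_ : ι) × κ => s.2) hab
        exact this
    have hsig : (F.sigma (fun i => (Nb i).erase (des i))).card
        = ∑ i ∈ F, ((Nb i).card - 1) := by
      rw [Finset.card_sigma]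
      apply Finset.sum_congr rfl
      intro i hi
      have hiA : i ∈ A := (mem_filter.1 hi).1
      have hnem : (Nb i).Nonempty := hne i hiA
      rw [card_erase_of_mem ((hdes i hnem).1)]
    rw [hsig] at hinj
    have : (C.erase j₀).card = C.card - 1 := card_erase_of_mem hj₀C
    have hC1 : 1 ≤ C.card := card_pos.2 ⟨j₀, hj₀C⟩
    omega


lemma card_val_interval (m a b : ℕ) (hb : b ≤ m) :
    ((Finset.univ : Finset (Fin m)).filter (fun j : Fin m => a ≤ (j:ℕ) ∧ (j:ℕ) < b)).card = b - a := by
  rw [← Nat.card_Ico a b]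
  apply Finset.card_bij (fun (j : Fin m) (_ : j ∈ (Finset.univ : Finset (Fin m)).filter
    (fun j : Fin m => a ≤ (j:ℕ) ∧ (j:ℕ) < b)) => (j : ℕ))
  · intro j hj
    rw [Finset.mem_filter] at hj
    rw [Finset.mem_Ico]
    exact hj.2
  · intro j1 _ j2 _ h
    exact Fin.val_injective h
  · intro t ht
    rw [Finset.mem_Ico] at ht
    exact ⟨⟨t, lt_of_lt_of_le ht.2 hb⟩, by simp [ht.1, ht.2], rfl⟩

lemma hall_key_aux {ι κ : Type} [DecidableEq ι] [DecidableEq κ] (k q : ℕ) (hk : 0 < k) :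
    ∀ (N : ℕ) (A : Finset ι) (M : Finset κ) (Nb : ι → Finset κ), M.card ≤ N →
    (∀ i ∈ A, (Nb i).Nonempty) → (∀ i ∈ A, Nb i ⊆ M) →
    (∀ j ∈ M, (A.filter (fun i => j ∈ Nb i)).card ≤ q + 1) →
    ((k+1) * q * M.card + M.card + 1 ≤ (k+1) * A.card) →
    ∃ T ⊆ M, T.Nonempty ∧ (k*q+1) * T.card ≤ k * (A.filter (fun i => Nb i ⊆ T)).card := by
  intro N
  induction N with
  | zero =>
    intro A M Nb hMN hne hsub hdeg hcard
    exfalso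
    have hM : M = ∅ := card_eq_zero.1 (Nat.le_zero.1 hMN)
    have hA : A.Nonempty := by
      rw [← card_pos]
      rcases Nat.eq_zero_or_pos A.card with h | h
      · rw [h, mul_zero] at hcard; omega
      · exact h
    obtain ⟨i, hi⟩ := hA
    obtain ⟨j, hj⟩ := hne i hi
    have := hsub i hi hj
    rw [hM] at this
    exact absurd this (by simp)
  | succ N ih =>
    intro A M Nb hMN hne hsub hdeg hcard
    classical
    -- removal principle
    have removal : ∀ C : Finset κ, C ⊆ M → C.Nonempty →
        (A.filter (fun i => ¬ Disjoint (Nb i) C)).card ≤ q * C.card + C.card / (k+1) →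
        ∃ T ⊆ M, T.Nonempty ∧
          (k*q+1) * T.card ≤ k * (A.filter (fun i => Nb i ⊆ T)).card := by
      intro C hCM hCne htouch
      set W : Finset ι := A.filter (fun i => ¬ Disjoint (Nb i) C) with hW
      have hWA : W ⊆ A := filter_subset _ _
      have hM'card : (M \ C).card ≤ N := by
        have h1 : (M \ C).card = M.card - C.card := by rw [card_sdiff, inter_eq_left.2 hCM]
        have h2 : 1 ≤ C.card := card_pos.2 hCne
        have h3 : C.card ≤ M.card := card_le_card hCM
        omega
      have hne' : ∀ i ∈ A \ W, (Nb i).Nonempty := fun i hi => hne i (sdiff_subset hi)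
      have hsub' : ∀ i ∈ A \ W, Nb i ⊆ M \ C := by
        intro i hi
        have hiA : i ∈ A := sdiff_subset hi
        have hiW : i ∉ W := (mem_sdiff.1 hi).2
        have hdisj : Disjoint (Nb i) C := by
          by_contra h
          exact hiW (mem_filter.2 ⟨hiA, h⟩)
        intro j hj
        rw [mem_sdiff]
        exact ⟨hsub i hiA hj, fun hjC => (disjoint_left.1 hdisj) hj hjC⟩
      have hdeg' : ∀ j ∈ M \ C, ((A \ W).filter (fun i => j ∈ Nb i)).card ≤ q + 1 := by
        intro j hj
        exact le_trans (card_le_card (filter_subset_filter _ sdiff_subset))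
          (hdeg j (sdiff_subset hj))
      have hcard' : (k+1) * q * (M \ C).card + (M \ C).card + 1 ≤ (k+1) * (A \ W).card := by
        have e1 : (M \ C).card = M.card - C.card := by rw [card_sdiff, inter_eq_left.2 hCM]
        have e2 : (A \ W).card = A.card - W.card := by rw [card_sdiff, inter_eq_left.2 hWA]
        have h2 : C.card ≤ M.card := card_le_card hCM
        have h3 : W.card ≤ A.card := card_le_card hWA
        have h4 : (k+1) * W.card ≤ (k+1) * (q * C.card) + (k+1) * (C.card / (k+1)) := by
          calc (k+1) * W.card ≤ (k+1) * (q * C.card + C.card / (k+1)) :=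
                Nat.mul_le_mul_left _ htouch
            _ = (k+1) * (q * C.card) + (k+1) * (C.card / (k+1)) := by ring
        have h5 : (k+1) * (C.card / (k+1)) ≤ C.card := by
          rw [mul_comm]
          exact Nat.div_mul_le_self _ _
        -- cast to ℤ
        zify [e1, e2, h2, h3] at *
        nlinarith [hcard, h4, h5]
      obtain ⟨T, hTM', hTne, hTcard⟩ := ih (A \ W) (M \ C) Nb hM'card hne' hsub' hdeg' hcard'
      refine ⟨T, le_trans hTM' sdiff_subset, hTne, ?_⟩
      calc (k*q+1) * T.card ≤ k * ((A \ W).filter (fun i => Nb i ⊆ T)).card := hTcard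
        _ ≤ k * (A.filter (fun i => Nb i ⊆ T)).card :=
            Nat.mul_le_mul_left _ (card_le_card (filter_subset_filter _ sdiff_subset))
    by_cases hB : ∃ j ∈ M, (A.filter (fun i => j ∈ Nb i)).card ≤ q
    · obtain ⟨j, hjM, hjq⟩ := hB
      apply removal {j} (singleton_subset_iff.2 hjM) (singleton_nonempty j)
      have heq : A.filter (fun i => ¬ Disjoint (Nb i) {j}) = A.filter (fun i => j ∈ Nb i) := by
        apply filter_congr
        intro i _
        simp [Finset.disjoint_singleton_right]
      rw [heq]
      have : ({j} : Finset κ).card = 1 := card_singleton j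
      rw [this]
      have : 1 / (k+1) = 0 := Nat.div_eq_of_lt (by omega)
      omega
    · push_neg at hB
      have hdeg_eq : ∀ j ∈ M, (A.filter (fun i => j ∈ Nb i)).card = q + 1 := by
        intro j hj
        have := hB j hj
        have := hdeg j hj
        omega
      -- M is nonempty
      have hMne : M.Nonempty := by
        rw [← card_pos]
        by_contra h
        push_neg at h
        have hM0 : M.card = 0 := by omega
        have hA : A.Nonempty := by
          rw [← card_pos]
          rcases Nat.eq_zero_or_pos A.card with h' | h'
          · simp [hM0, h'] at hcard
          · exact h'
        obtain ⟨i, hi⟩ := hA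
        obtain ⟨j, hj⟩ := hne i hi
        have := card_pos.2 ⟨j, hsub i hi hj⟩
        omega
      obtain ⟨j₀, hj₀⟩ := hMne
      obtain ⟨C, hCM, hj₀C, hclosed, hcount⟩ := conn_bound A Nb M j₀ hj₀ hne hsub
      set F : Finset ι := A.filter (fun i => Nb i ⊆ C) with hF
      have hCne : C.Nonempty := ⟨j₀, hj₀C⟩
      -- double counting: ∑_{j ∈ C} deg j = ∑_{i ∈ F} |Nb i|
      have hdouble : C.card * (q+1) = ∑ i ∈ F, (Nb i).card := by
        have h1 : ∑ j ∈ C, (A.filter (fun i => j ∈ Nb i)).card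
            = ∑ i ∈ A, (Nb i ∩ C).card := by
          simp only [card_eq_sum_ones]
          rw [Finset.sum_sigma', Finset.sum_sigma']
          apply Finset.sum_nbij' (fun x => ⟨x.2, x.1⟩) (fun x => ⟨x.2, x.1⟩) <;>
            simp +contextual [Finset.mem_sigma, Finset.mem_inter, and_comm]
        have h2 : ∑ j ∈ C, (A.filter (fun i => j ∈ Nb i)).card = C.card * (q+1) := by
          rw [Finset.sum_congr rfl (fun j hj => hdeg_eq j (hCM hj)), sum_const, smul_eq_mul]
        have h3 : ∑ i ∈ A, (Nb i ∩ C).card = ∑ i ∈ F, (Nb i).card := by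
          rw [← Finset.sum_subset (filter_subset (fun i => Nb i ⊆ C) A)]
          · apply Finset.sum_congr rfl
            intro i hi
            rw [inter_eq_left.2 (mem_filter.1 hi).2]
          · intro i hiA hiF
            rw [card_eq_zero, ← disjoint_iff_inter_eq_empty]
            by_contra h
            obtain ⟨j, hj1, hj2⟩ := Finset.not_disjoint_iff.1 h
            exact hiF (mem_filter.2 ⟨hiA, hclosed i hiA j hj1 hj2⟩)
        omega
      have hFcardsum : ∑ i ∈ F, (Nb i).card
          = (∑ i ∈ F, ((Nb i).card - 1)) + F.card := by
        rw [card_eq_sum_ones F, ← Finset.sum_add_distrib]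
        apply Finset.sum_congr rfl
        intro i hi
        have := card_pos.2 (hne i (mem_filter.1 hi).1)
        omega
      set X : ℕ := ∑ i ∈ F, ((Nb i).card - 1) with hX
      by_cases hwin : (k*q+1) * C.card ≤ k * F.card
      · exact ⟨C, hCM, hCne, hwin⟩
      · push_neg at hwin
        apply removal C hCM hCne
        have heqT : A.filter (fun i => ¬ Disjoint (Nb i) C) = F := by
          apply filter_congr
          intro i hi
          constructor
          · intro h
            obtain ⟨j, hj1, hj2⟩ := Finset.not_disjoint_iff.1 h
            exact hclosed i hi j hj1 hj2
          · intro h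
            obtain ⟨j, hj⟩ := hne i hi
            exact Finset.not_disjoint_iff.2 ⟨j, hj, h hj⟩
        rw [heqT]
        have hc1 : 1 ≤ C.card := card_pos.2 hCne
        -- F.card + X = C.card * q + C.card, C.card ≤ 1 + X
        have hFXC : F.card + X = C.card * q + C.card := by
          have h := hdouble.trans hFcardsum
          have h2 : C.card * (q+1) = C.card * q + C.card := by ring
          rw [h2] at h
          omega
        by_cases hck : C.card ≤ k
        · -- show F.card ≤ q * C.card
          have hfq : F.card ≤ q * C.card := by
            by_contra h
            push_neg at h
            have h1 : k * (q * C.card) + k ≤ k * F.card := by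
              calc k * (q * C.card) + k = k * (q * C.card + 1) := by ring
                _ ≤ k * F.card := Nat.mul_le_mul_left _ h
            have h2 : k * F.card < k * (q * C.card) + C.card := by
              calc k * F.card < (k*q+1) * C.card := hwin
                _ = k * (q * C.card) + C.card := by ring
            have h3 : k < C.card := by linarith
            omega
          exact le_trans hfq (Nat.le_add_right _ _)
        · push_neg at hck
          have hdiv : 1 ≤ C.card / (k+1) := (Nat.one_le_div_iff (by omega)).2 (by omega)
          have hfq : F.card ≤ q * C.card + 1 := by linarith
          linarith

lemma hall_key {ι κ : Type} [DecidableEq ι] [DecidableEq κ] (k q : ℕ) (hk : 0 < k)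
    (A : Finset ι) (M : Finset κ) (Nb : ι → Finset κ)
    (hne : ∀ i ∈ A, (Nb i).Nonempty) (hsub : ∀ i ∈ A, Nb i ⊆ M)
    (hdeg : ∀ j ∈ M, (A.filter (fun i => j ∈ Nb i)).card ≤ q + 1)
    (hcard : (k+1) * q * M.card + M.card + 1 ≤ (k+1) * A.card) :
    ∃ T ⊆ M, T.Nonempty ∧ (k*q+1) * T.card ≤ k * (A.filter (fun i => Nb i ⊆ T)).card :=
  hall_key_aux k q hk M.card A M Nb le_rfl hne hsub hdeg hcard

/-- Balancing with `n` applications of common load `p` and unit memory, `m` machines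
with memory capacity `Q = ⌈n/m⌉ = n/m + 1` (since `n % m > 0`): the minimum
achievable maximum machine load is `p * (⌊n/m⌋ + 1/⌊m/(n % m)⌋)`. -/
theorem min_max_load_tight (n m : ℕ) (p : ℚ) (hp : 0 < p) (hn : 0 < n)
    (hm : 0 < m) (hmod : n % m ≠ 0) :
    IsLeast {L : ℚ | ∃ x : Fin n → Fin m → ℚ,
      (∀ i j, 0 ≤ x i j) ∧
      (∀ i, p ≤ ∑ j, x i j) ∧
      (∀ j, (Finset.univ.filter (fun i => x i j ≠ 0)).card ≤ n / m + 1) ∧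
      (∀ j, ∑ i, x i j ≤ L)}
      (p * (((n / m : ℕ) : ℚ) + 1 / ((m / (n % m) : ℕ) : ℚ))) := by
  classical
  set q := n / m with hq
  set r := n % m with hrdef
  set k := m / r with hkdef
  have hr : 0 < r := Nat.pos_of_ne_zero hmod
  have hrm : r < m := Nat.mod_lt n hm
  have hk1 : 1 ≤ k := (Nat.one_le_div_iff hr).2 (le_of_lt hrm)
  have hkr : k * r ≤ m := by
    rw [hkdef, mul_comm]
    exact Nat.mul_div_le m r
  have hmlt : m < (k+1) * r := by
    have h1 : r * k + m % r = m := by rw [hkdef]; exact Nat.div_add_mod m r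
    have h2 : m % r < r := Nat.mod_lt m hr
    have h3 : (k+1) * r = r * k + r := by ring
    omega
  have hn_eq : m * q + r = n := Nat.div_add_mod n m
  have hk0Q : (0:ℚ) < (k:ℚ) := by exact_mod_cast hk1
  constructor
  · -- membership : construction
    simp only [Set.mem_setOf_eq]
    set f : Fin n → Fin m → ℚ := fun i j =>
      if (i:ℕ) < m*q then (if (i:ℕ) % m = (j:ℕ) then p else 0)
      else (if ((i:ℕ) - m*q) * k ≤ (j:ℕ) ∧ (j:ℕ) < ((i:ℕ) - m*q) * k + k then p / k else 0)
      with hf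
    have hfe : ∀ i j, f i j = if (i:ℕ) < m*q then (if (i:ℕ) % m = (j:ℕ) then p else 0)
      else (if ((i:ℕ) - m*q) * k ≤ (j:ℕ) ∧ (j:ℕ) < ((i:ℕ) - m*q) * k + k then p / k else 0) :=
      fun i j => rfl
    have hdesc : ∀ (i : Fin n) (j : Fin m), f i j ≠ 0 →
        ((i:ℕ) < m*q ∧ (i:ℕ) % m = (j:ℕ)) ∨
        (m*q ≤ (i:ℕ) ∧ ((i:ℕ) - m*q) * k ≤ (j:ℕ) ∧ (j:ℕ) < ((i:ℕ) - m*q) * k + k) := by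
      intro i j hne
      rw [hfe] at hne
      split_ifs at hne with h1 h2 h3
      · exact Or.inl ⟨h1, h2⟩
      · exact absurd rfl hne
      · exact Or.inr ⟨not_lt.1 h1, h3⟩
      · exact absurd rfl hne
    have huniq : ∀ (t1 t2 j : ℕ), t1 * k ≤ j → j < t1 * k + k →
        t2 * k ≤ j → j < t2 * k + k → t1 = t2 := by
      intro t1 t2 j h1 h2 h3 h4
      have e1 : j / k = t1 := Nat.div_eq_of_lt_le h1 (by rw [Nat.succ_mul]; exact h2)
      have e2 : j / k = t2 := Nat.div_eq_of_lt_le h3 (by rw [Nat.succ_mul]; exact h4)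
      omega
    have hin : ∀ i : Fin n, ¬ ((i:ℕ) < m*q) → ((i:ℕ) - m*q) * k + k ≤ m := by
      intro i hi
      have hiN := i.isLt
      have htr : (i:ℕ) - m*q + 1 ≤ r := by omega
      calc ((i:ℕ) - m*q) * k + k = ((i:ℕ) - m*q + 1) * k := by ring
        _ ≤ r * k := Nat.mul_le_mul_right k htr
        _ ≤ m := by rw [mul_comm]; exact hkr
    refine ⟨f, ?_, ?_, ?_, ?_⟩
    · intro i j
      rw [hfe]
      split_ifs <;> positivity
    · intro i
      by_cases hi : (i:ℕ) < m*q
      · have heval : ∀ j : Fin m, f i j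
            = if (⟨(i:ℕ) % m, Nat.mod_lt _ hm⟩ : Fin m) = j then p else 0 := by
          intro j
          rw [hfe, if_pos hi]
          congr 1
          rw [eq_iff_iff, Fin.ext_iff]
        rw [Finset.sum_congr rfl (fun j _ => heval j), Finset.sum_ite_eq]
        all_goals simp
      · have heval : ∀ j : Fin m, f i j
            = if ((i:ℕ) - m*q) * k ≤ (j:ℕ) ∧ (j:ℕ) < ((i:ℕ) - m*q) * k + k then p / k else 0 := by
          intro j
          rw [hfe, if_neg hi]
        rw [Finset.sum_congr rfl (fun j _ => heval j), Finset.sum_ite, Finset.sum_const,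
          Finset.sum_const_zero, add_zero, card_val_interval _ _ _ (hin i hi)]
        have hcard : ((i:ℕ) - m*q) * k + k - ((i:ℕ) - m*q) * k = k := by omega
        rw [hcard, nsmul_eq_mul]
        have hkp : (k:ℚ) * (p / k) = p := by field_simp
        rw [hkp]
    · intro j
      have : ((Finset.univ : Finset (Fin n)).filter (fun i : Fin n => f i j ≠ 0)).card
          ≤ (Finset.range (q+1)).card := by
        apply Finset.card_le_card_of_injOn (fun i : Fin n => (i:ℕ) / m)
        · intro i _
          simp only [Finset.mem_coe, Finset.mem_range]
          rw [Nat.div_lt_iff_lt_mul hm]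
          have hiN := i.isLt
          have h7 : n ≤ (q+1)*m := by
            calc n = m*q + r := hn_eq.symm
              _ ≤ m*q + m := Nat.add_le_add_left (le_of_lt hrm) _
              _ = (q+1)*m := by ring
          omega
        · intro i1 h1 i2 h2 heq
          simp only [Finset.mem_coe, Finset.mem_filter] at h1 h2
          dsimp only at heq
          have d1 := hdesc i1 j h1.2
          have d2 := hdesc i2 j h2.2
          rcases d1 with ⟨ha1, hb1⟩ | ⟨ha1, hb1, hc1⟩ <;>
            rcases d2 with ⟨ha2, hb2⟩ | ⟨ha2, hb2, hc2⟩
          · have hdm1 := Nat.div_add_mod (i1:ℕ) m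
            have hdm2 := Nat.div_add_mod (i2:ℕ) m
            rw [heq] at hdm1
            apply Fin.ext
            omega
          · exfalso
            have l1 : (i1:ℕ)/m < q := by
              rw [Nat.div_lt_iff_lt_mul hm, mul_comm]; exact ha1
            have l2 : q ≤ (i2:ℕ)/m := by
              rw [Nat.le_div_iff_mul_le hm, mul_comm]; exact ha2
            omega
          · exfalso
            have l1 : q ≤ (i1:ℕ)/m := by
              rw [Nat.le_div_iff_mul_le hm, mul_comm]; exact ha1
            have l2 : (i2:ℕ)/m < q := by
              rw [Nat.div_lt_iff_lt_mul hm, mul_comm]; exact ha2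
            omega
          · have := huniq _ _ _ hb1 hc1 hb2 hc2
            apply Fin.ext
            omega
      calc _ ≤ (Finset.range (q+1)).card := this
        _ = q + 1 := Finset.card_range _
    · intro j
      rw [← Finset.sum_filter_add_sum_filter_not Finset.univ (fun i : Fin n => (i:ℕ) < m*q)]
      have hpart1 : ∑ i ∈ Finset.univ.filter (fun i : Fin n => (i:ℕ) < m*q), f i j
          ≤ (q:ℚ) * p := by
        have e1 : ∑ i ∈ Finset.univ.filter (fun i : Fin n => (i:ℕ) < m*q), f i j
            = ∑ i ∈ Finset.univ.filter (fun i : Fin n => (i:ℕ) < m*q),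
              (if (i:ℕ) % m = (j:ℕ) then p else 0) := by
          apply Finset.sum_congr rfl
          intro i hi
          rw [hfe, if_pos (Finset.mem_filter.1 hi).2]
        rw [e1, Finset.sum_ite, Finset.sum_const, Finset.sum_const_zero, add_zero,
          nsmul_eq_mul]
        apply mul_le_mul_of_nonneg_right ?_ hp.le
        have hcq : (((Finset.univ.filter (fun i : Fin n => (i:ℕ) < m*q))).filter
            (fun i : Fin n => (i:ℕ) % m = (j:ℕ))).card ≤ q := by
          have h8 : (((Finset.univ.filter (fun i : Fin n => (i:ℕ) < m*q))).filter
              (fun i : Fin n => (i:ℕ) % m = (j:ℕ))).card ≤ (Finset.range q).card := by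
            apply Finset.card_le_card_of_injOn (fun i : Fin n => (i:ℕ) / m)
            · intro i hi
              simp only [Finset.mem_coe, Finset.mem_filter] at hi
              simp only [Finset.mem_coe, Finset.mem_range]
              rw [Nat.div_lt_iff_lt_mul hm, mul_comm]
              exact hi.1.2
            · intro i1 h1 i2 h2 heq
              simp only [Finset.mem_coe, Finset.mem_filter] at h1 h2
              dsimp only at heq
              have hdm1 := Nat.div_add_mod (i1:ℕ) m
              have hdm2 := Nat.div_add_mod (i2:ℕ) m
              rw [heq] at hdm1
              have hb1 := h1.2
              have hb2 := h2.2
              apply Fin.ext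
              omega
          rw [Finset.card_range] at h8
          exact h8
        exact_mod_cast hcq
      have hpart2 : ∑ i ∈ Finset.univ.filter (fun i : Fin n => ¬ (i:ℕ) < m*q), f i j
          ≤ p / k := by
        have e1 : ∑ i ∈ Finset.univ.filter (fun i : Fin n => ¬ (i:ℕ) < m*q), f i j
            = ∑ i ∈ Finset.univ.filter (fun i : Fin n => ¬ (i:ℕ) < m*q),
              (if ((i:ℕ) - m*q) * k ≤ (j:ℕ) ∧ (j:ℕ) < ((i:ℕ) - m*q) * k + k
                then p / k else 0) := by
          apply Finset.sum_congr rfl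
          intro i hi
          rw [hfe, if_neg (Finset.mem_filter.1 hi).2]
        rw [e1, Finset.sum_ite, Finset.sum_const, Finset.sum_const_zero, add_zero]
        have hcard1 : (((Finset.univ.filter (fun i : Fin n => ¬ (i:ℕ) < m*q))).filter
            (fun i : Fin n => ((i:ℕ) - m*q) * k ≤ (j:ℕ) ∧ (j:ℕ) < ((i:ℕ) - m*q) * k + k)).card
            ≤ 1 := by
          rw [Finset.card_le_one]
          intro i1 h1 i2 h2
          simp only [Finset.mem_filter] at h1 h2
          have := huniq _ _ _ h1.2.1 h1.2.2 h2.2.1 h2.2.2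
          have ha1 := h1.1.2
          have ha2 := h2.1.2
          apply Fin.ext
          omega
        have hpk : (0:ℚ) ≤ p / k := by positivity
        rcases Nat.le_one_iff_eq_zero_or_eq_one.1 hcard1 with h | h <;> rw [h]
        · simpa using hpk
        · simp
      have hfinal : (q:ℚ) * p + p / k = p * ((q:ℚ) + 1/(k:ℚ)) := by ring
      linarith
  · -- lower bound
    rintro L ⟨x, hx0, hxrow, hxsupp, hxload⟩
    set Nb : Fin n → Finset (Fin m) := fun i => univ.filter (fun j => x i j ≠ 0) with hNb
    have hne : ∀ i ∈ (univ : Finset (Fin n)), (Nb i).Nonempty := by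
      intro i _
      rw [hNb, filter_nonempty_iff]
      by_contra h
      push_neg at h
      have : ∑ j, x i j = 0 := Finset.sum_eq_zero (fun j hj => h j hj)
      have := hxrow i
      linarith
    have hdeg : ∀ j ∈ (univ : Finset (Fin m)),
        ((univ : Finset (Fin n)).filter (fun i => j ∈ Nb i)).card ≤ q + 1 := by
      intro j _
      have heq : (univ : Finset (Fin n)).filter (fun i => j ∈ Nb i)
          = univ.filter (fun i => x i j ≠ 0) := by
        apply filter_congr
        intro i _
        simp [hNb]
      rw [heq]
      exact hxsupp j
    have hcard : (k+1) * q * (univ : Finset (Fin m)).card + (univ : Finset (Fin m)).card + 1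
        ≤ (k+1) * (univ : Finset (Fin n)).card := by
      simp only [card_univ, Fintype.card_fin]
      have h1 : m + 1 ≤ (k+1) * r := hmlt
      calc (k+1) * q * m + m + 1 ≤ (k+1) * q * m + (k+1) * r := by
            have := Nat.add_le_add_left h1 ((k+1) * q * m)
            omega
        _ = (k+1) * (m * q + r) := by ring
        _ = (k+1) * n := by rw [hn_eq]
    obtain ⟨T, hTM, hTne, hineq⟩ := hall_key k q hk1 univ univ Nb hne
      (fun i _ => subset_univ _) hdeg hcard
    set S : Finset (Fin n) := univ.filter (fun i => Nb i ⊆ T) with hS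
    have hSmain : p * S.card ≤ T.card * L := by
      have h1 : ∀ i ∈ S, p ≤ ∑ j ∈ T, x i j := by
        intro i hiS
        have hsubT : Nb i ⊆ T := (mem_filter.1 hiS).2
        have heq : ∑ j ∈ T, x i j = ∑ j, x i j := by
          apply Finset.sum_subset (subset_univ T)
          intro j _ hjT
          by_contra h
          exact hjT (hsubT (by simp [hNb, h]))
        rw [heq]
        exact hxrow i
      calc p * S.card = ∑ _i ∈ S, p := by rw [sum_const, nsmul_eq_mul, mul_comm]
        _ ≤ ∑ i ∈ S, ∑ j ∈ T, x i j := Finset.sum_le_sum h1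
        _ = ∑ j ∈ T, ∑ i ∈ S, x i j := Finset.sum_comm
        _ ≤ ∑ j ∈ T, ∑ i, x i j := Finset.sum_le_sum (fun j _ =>
            Finset.sum_le_sum_of_subset_of_nonneg (subset_univ S) (fun i _ _ => hx0 i j))
        _ ≤ ∑ _j ∈ T, L := Finset.sum_le_sum (fun j _ => hxload j)
        _ = T.card * L := by rw [sum_const, nsmul_eq_mul]
    have hT0 : (0:ℚ) < T.card := by
      have := card_pos.2 hTne
      exact_mod_cast this
    have hk0 : (0:ℚ) < k := by exact_mod_cast hk1
    have h2 : p * ((k:ℚ)*q+1) ≤ (k:ℚ) * L := by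
      have h3 : p * ((k:ℚ)*q+1) * T.card ≤ (k:ℚ) * L * T.card := by
        have hc : ((k*q+1 : ℕ):ℚ) * T.card ≤ (k:ℚ) * S.card := by
          exact_mod_cast hineq
        calc p * ((k:ℚ)*q+1) * T.card = p * (((k*q+1:ℕ):ℚ) * T.card) := by push_cast; ring
          _ ≤ p * ((k:ℚ) * S.card) := mul_le_mul_of_nonneg_left hc hp.le
          _ = (k:ℚ) * (p * S.card) := by ring
          _ ≤ (k:ℚ) * (T.card * L) := mul_le_mul_of_nonneg_left hSmain hk0.le
          _ = (k:ℚ) * L * T.card := by ring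
      exact le_of_mul_le_mul_right h3 hT0
    have heqv : p * ((q:ℚ) + 1/(k:ℚ)) = p * ((k:ℚ)*q+1) / k := by
      rw [eq_div_iff hk0.ne']
      field_simp
    rw [heqv, div_le_iff₀ hk0]
    linarith
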